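/- For n ≥ k ≥ 1, the sum of q^{2̲13(σ)} over 1̲32-avoiding permutations σ of [n] with exactly k−1 descents equals S̃_q(n,k), where 2̲13(σ) counts triples of positions i < j < j+1 with σ_j < σ_i < σ_{j+1}. -/

import Mathlib

open Finset

variable {n : ℕ}

/-- The word (in one-line notation, with letters `1,...,n`) of a permutation of `[n]`. -/
def pw (p : Equiv.Perm (Fin n)) : Fin n → ℕ := fun i => (p i : ℕ) + 1

/-- Descent number of a word: positions `i` with `w_i > w_{i+1}`. -/
def desW (w : Fin n → ℕ) : ℕ :=
  (Finset.univ.filter fun i : Fin n => ∃ j : Fin n, (j : ℕ) = (i : ℕ) + 1 ∧ w j < w i).card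

/-- Major index of a word: the sum of the (1-indexed) descent positions. -/
def majW (w : Fin n → ℕ) : ℕ :=
  ∑ i ∈ Finset.univ.filter
      (fun i : Fin n => ∃ j : Fin n, (j : ℕ) = (i : ℕ) + 1 ∧ w j < w i), ((i : ℕ) + 1)

/-- Occurrences of the vincular pattern 2-31: `i < j` with `w_{j+1} < w_i < w_j`. -/
def pat2_31 (w : Fin n → ℕ) : ℕ :=
  ((Finset.univ ×ˢ Finset.univ).filter fun q : Fin n × Fin n =>
    q.1 < q.2 ∧ ∃ j' : Fin n, (j' : ℕ) = (q.2 : ℕ) + 1 ∧ w j' < w q.1 ∧ w q.1 < w q.2).card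

/-- Occurrences of the vincular pattern 2-13: `i < j` with `w_j < w_i < w_{j+1}`. -/
def pat2_13 (w : Fin n → ℕ) : ℕ :=
  ((Finset.univ ×ˢ Finset.univ).filter fun q : Fin n × Fin n =>
    q.1 < q.2 ∧ ∃ j' : Fin n, (j' : ℕ) = (q.2 : ℕ) + 1 ∧ w q.2 < w q.1 ∧ w q.1 < w j').card

/-- Occurrences of the vincular pattern 1-32: `i < j` with `w_i < w_{j+1} < w_j`. -/
def pat1_32 (w : Fin n → ℕ) : ℕ :=
  ((Finset.univ ×ˢ Finset.univ).filter fun q : Fin n × Fin n =>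
    q.1 < q.2 ∧ ∃ j' : Fin n, (j' : ℕ) = (q.2 : ℕ) + 1 ∧ w q.1 < w j' ∧ w j' < w q.2).card

/-- Occurrences of the vincular pattern 3-21: `i < j` with `w_{j+1} < w_j < w_i`. -/
def pat3_21 (w : Fin n → ℕ) : ℕ :=
  ((Finset.univ ×ˢ Finset.univ).filter fun q : Fin n × Fin n =>
    q.1 < q.2 ∧ ∃ j' : Fin n, (j' : ℕ) = (q.2 : ℕ) + 1 ∧ w j' < w q.2 ∧ w q.2 < w q.1).card

/-- The Babson–Steingrímsson statistic BAST = (21) + (2-13) + (1-32) + (3-21). -/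
def BAST (w : Fin n → ℕ) : ℕ := desW w + pat2_13 w + pat1_32 w + pat3_21 w

/-- `w` avoids the vincular pattern 1-32: there is no `i < j` with `w_i < w_{j+1} < w_j`. -/
def Avoids132 (w : Fin n → ℕ) : Prop :=
  ∀ i j j' : Fin n, i < j → (j' : ℕ) = (j : ℕ) + 1 → ¬(w i < w j' ∧ w j' < w j)

open Polynomial in
/-- The q-integer [k]_q. -/
noncomputable def qint (k : ℕ) : Polynomial ℚ := ∑ i ∈ Finset.range k, X ^ i

/-- The q-Stirling number S̃_q(n,k). -/
noncomputable def Sqt : ℕ → ℕ → Polynomial ℚ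
  | 0, 0 => 1
  | 0, _ + 1 => 0
  | _ + 1, 0 => 0
  | n + 1, k + 1 => Sqt n k + qint (k + 1) * Sqt n (k + 1)

----------------------------------------------------------------
-- Auxiliary: identity-land
----------------------------------------------------------------

open Polynomial

lemma Sqt_zero_succ (k : ℕ) : Sqt 0 (k+1) = 0 := rfl
lemma Sqt_succ_zero (m : ℕ) : Sqt (m+1) 0 = 0 := rfl
lemma Sqt_succ_succ (m k : ℕ) : Sqt (m+1) (k+1) = Sqt m k + qint (k + 1) * Sqt m (k + 1) := rfl

lemma Sqt_eq_zero_of_lt : ∀ {m k : ℕ}, m < k → Sqt m k = 0 := by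
  intro m
  induction m with
  | zero => intro k hk; cases k with
    | zero => omega
    | succ k => rfl
  | succ m ih =>
    intro k hk
    cases k with
    | zero => omega
    | succ k =>
      rw [Sqt_succ_succ, ih (by omega), ih (by omega), mul_zero, add_zero]

lemma qint_succ (k : ℕ) : qint (k+1) = qint k + X ^ k := by
  simp [qint, Finset.sum_range_succ]

lemma qint_succ' (k : ℕ) : qint (k+1) = 1 + X * qint k := by
  rw [qint, qint, Finset.sum_range_succ', Finset.mul_sum]
  simp [pow_succ, mul_comm, add_comm]

lemma Sqt_one (m : ℕ) (hm : 1 ≤ m) : Sqt m 1 = 1 := by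
  induction m with
  | zero => omega
  | succ m ih =>
    rw [Sqt_succ_succ]
    cases m with
    | zero => norm_num [Sqt, qint]
    | succ m => rw [Sqt_succ_zero, ih (by omega)]; simp [qint]

/-- subsets of `range n` containing `0` -/
def bset (n : ℕ) : Finset (Finset ℕ) := (Finset.range n).powerset.filter (fun B => 0 ∈ B)

lemma mem_bset {n : ℕ} {B : Finset ℕ} : B ∈ bset n ↔ B ⊆ Finset.range n ∧ 0 ∈ B := by
  simp [bset]

lemma card_le_of_mem_bset {n : ℕ} {B : Finset ℕ} (h : B ∈ bset n) : B.card ≤ n := by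
  have := Finset.card_le_card (mem_bset.mp h).1
  simpa using this

lemma bset_card_eq {n : ℕ} {B : Finset ℕ} (h : B ∈ bset n) (hc : B.card = n) :
    B = Finset.range n := by
  refine Finset.eq_of_subset_of_card_le (mem_bset.mp h).1 (by simp [hc])

lemma range_mem_bset {n : ℕ} (hn : 1 ≤ n) : Finset.range n ∈ bset n := by
  simp [mem_bset, Finset.mem_range]; omega

lemma sup_range_id (n : ℕ) (hn : 1 ≤ n) : (Finset.range n).sup id = n - 1 := by
  apply le_antisymm
  · exact Finset.sup_le fun x hx => by simp only [Finset.mem_range] at hx; simp; omega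
  · exact Finset.le_sup (f := id) (by simp [Finset.mem_range]; omega)


lemma bset_filter_not_mem (m : ℕ) : (bset (m+1)).filter (fun B => m ∉ B) = bset m := by
  ext B
  simp only [Finset.mem_filter, mem_bset]
  constructor
  · rintro ⟨⟨hsub, h0⟩, hm⟩
    refine ⟨fun x hx => ?_, h0⟩
    have := hsub hx
    simp only [Finset.mem_range] at this ⊢
    rcases Nat.lt_succ_iff_lt_or_eq.mp this with h | rfl
    · exact h
    · exact absurd hx hm
  · rintro ⟨hsub, h0⟩
    have hm : m ∉ B := fun hx => by have := hsub hx; simp at this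
    exact ⟨⟨hsub.trans (by intro x; simp only [Finset.mem_range]; omega), h0⟩, hm⟩

lemma sum_bset_insert (m : ℕ) (hm : 1 ≤ m) (f : Finset ℕ → Polynomial ℚ) :
    ∑ B ∈ (bset (m+1)).filter (fun B => m ∈ B), f B = ∑ B ∈ bset m, f (insert m B) := by
  apply Finset.sum_nbij' (i := fun B => B.erase m) (j := fun B => insert m B)
  · intro B hB
    simp only [Finset.mem_filter, mem_bset] at hB
    obtain ⟨⟨hsub, h0⟩, hmem⟩ := hB
    rw [mem_bset]
    constructor
    · intro x hx
      simp only [Finset.mem_erase] at hx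
      have := hsub hx.2
      simp only [Finset.mem_range] at this ⊢
      omega
    · simp only [Finset.mem_erase]
      exact ⟨by omega, h0⟩
  · intro B hB
    rw [mem_bset] at hB
    simp only [Finset.mem_filter, mem_bset]
    refine ⟨⟨?_, ?_⟩, Finset.mem_insert_self _ _⟩
    · intro x hx
      rcases Finset.mem_insert.mp hx with rfl | hx
      · simp
      · have := hB.1 hx
        simp only [Finset.mem_range] at this ⊢
        omega
    · exact Finset.mem_insert_of_mem hB.2
  · intro B hB
    simp only [Finset.mem_filter] at hB
    exact Finset.insert_erase hB.2
  · intro B hB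
    rw [mem_bset] at hB
    apply Finset.erase_insert
    intro hx
    have := hB.1 hx
    simp at this
  · intro B hB
    simp only [Finset.mem_filter] at hB
    rw [Finset.insert_erase hB.2]

lemma not_mem_of_mem_bset {m : ℕ} {B : Finset ℕ} (hB : B ∈ bset m) : m ∉ B := by
  intro hx
  have := (mem_bset.mp hB).1 hx
  simp at this

open Polynomial in
lemma Klem (m : ℕ) (hm : 1 ≤ m) : ∀ k : ℕ,
    ∑ B ∈ bset m, X ^ (m - B.card) * Sqt (m - B.card) k = X ^ k * Sqt m (k+1) := by
  induction m with
  | zero => omega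
  | succ m ih =>
    intro k
    have hSone : Sqt (m+1) 1 = 1 := Sqt_one _ (by omega)
    -- k = 0 case first (any m)
    cases k with
    | zero =>
      rw [pow_zero, one_mul, hSone]
      rw [Finset.sum_eq_single (Finset.range (m+1))]
      · simp [Sqt]
      · intro B hB hne
        have hc : B.card < m + 1 := by
          have hle := card_le_of_mem_bset hB
          rcases Nat.lt_or_ge B.card (m+1) with h | h
          · exact h
          · exact absurd (bset_card_eq hB (by omega)) hne
        have : m + 1 - B.card = (m - B.card) + 1 := by omega
        rw [this, Sqt_succ_zero, mul_zero]
      · intro h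
        exact absurd (range_mem_bset (by omega)) h
    | succ k =>
      rcases Nat.eq_zero_or_pos m with rfl | hm1
      · -- m+1 = 1
        have hb1 : bset 1 = {{0}} := by decide
        rw [hb1, Finset.sum_singleton]
        have hc : ({0} : Finset ℕ).card = 1 := rfl
        rw [hc]
        simp [Sqt_succ_succ, Sqt_zero_succ]
      · -- main step
        rw [← Finset.sum_filter_add_sum_filter_not (bset (m+1)) (fun B => m ∈ B)]
        have part2 : ∑ B ∈ (bset (m+1)).filter (fun B => m ∈ B),
            X ^ (m + 1 - B.card) * Sqt (m + 1 - B.card) (k+1)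
            = X ^ (k+1) * Sqt m (k+2) := by
          rw [sum_bset_insert m hm1]
          rw [← ih hm1 (k+1)]
          apply Finset.sum_congr rfl
          intro B hB
          rw [Finset.card_insert_of_notMem (not_mem_of_mem_bset hB)]
          have : m + 1 - (B.card + 1) = m - B.card := by omega
          rw [this]
        have part1 : ∑ B ∈ (bset (m+1)).filter (fun B => ¬ m ∈ B),
            X ^ (m + 1 - B.card) * Sqt (m + 1 - B.card) (k+1)
            = X ^ (k+1) * Sqt m (k+1) + X * qint (k+1) * (X ^ (k+1) * Sqt m (k+2)) := by
          rw [bset_filter_not_mem]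
          have step : ∀ B ∈ bset m,
              X ^ (m + 1 - B.card) * Sqt (m + 1 - B.card) (k+1)
              = X * (X ^ (m - B.card) * Sqt (m - B.card) k)
                + X * qint (k+1) * (X ^ (m - B.card) * Sqt (m - B.card) (k+1)) := by
            intro B hB
            have hc := card_le_of_mem_bset hB
            have h1 : m + 1 - B.card = (m - B.card) + 1 := by omega
            rw [h1, Sqt_succ_succ, pow_succ]
            ring
          rw [Finset.sum_congr rfl step, Finset.sum_add_distrib, ← Finset.mul_sum,
            ← Finset.mul_sum, ih hm1 k, ih hm1 (k+1)]
          ring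
        rw [part2, part1]
        rw [show Sqt (m+1) (k+2) = Sqt m (k+1) + qint (k+2) * Sqt m (k+2) from rfl]
        rw [qint_succ' (k+1)]
        ring

open Polynomial in
lemma Ilem (n : ℕ) (hn : 1 ≤ n) : ∀ k : ℕ,
    ∑ B ∈ bset n, X ^ (B.sup id + 1 - B.card) * Sqt (n - B.card) k = Sqt n (k+1) := by
  induction n with
  | zero => omega
  | succ m ih =>
    intro k
    cases k with
    | zero =>
      rw [Sqt_one _ (by omega)]
      rw [Finset.sum_eq_single (Finset.range (m+1))]
      · rw [sup_range_id _ (by omega)]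
        simp [Sqt]
      · intro B hB hne
        have hc : B.card < m + 1 := by
          have hle := card_le_of_mem_bset hB
          rcases Nat.lt_or_ge B.card (m+1) with h | h
          · exact h
          · exact absurd (bset_card_eq hB (by omega)) hne
        have : m + 1 - B.card = (m - B.card) + 1 := by omega
        rw [this, Sqt_succ_zero, mul_zero]
      · intro h
        exact absurd (range_mem_bset (by omega)) h
    | succ k =>
      rcases Nat.eq_zero_or_pos m with rfl | hm1
      · have hb1 : bset 1 = {{0}} := by decide
        rw [hb1, Finset.sum_singleton]
        have hc : ({0} : Finset ℕ).card = 1 := rfl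
        rw [hc]
        simp [Sqt_succ_succ, Sqt_zero_succ]
      · rw [← Finset.sum_filter_add_sum_filter_not (bset (m+1)) (fun B => m ∈ B)]
        have part2 : ∑ B ∈ (bset (m+1)).filter (fun B => m ∈ B),
            X ^ (B.sup id + 1 - B.card) * Sqt (m + 1 - B.card) (k+1)
            = X ^ (k+1) * Sqt m (k+2) := by
          rw [sum_bset_insert m hm1]
          rw [← Klem m hm1 (k+1)]
          apply Finset.sum_congr rfl
          intro B hB
          have hsup : (insert m B).sup id = m := by
            rw [Finset.sup_insert]
            have : B.sup id ≤ m := Finset.sup_le fun x hx =>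
              le_of_lt (Finset.mem_range.mp ((mem_bset.mp hB).1 hx))
            exact sup_eq_left.mpr this
          rw [Finset.card_insert_of_notMem (not_mem_of_mem_bset hB), hsup]
          have h1 : m + 1 - (B.card + 1) = m - B.card := by omega
          rw [h1]
        have part1 : ∑ B ∈ (bset (m+1)).filter (fun B => ¬ m ∈ B),
            X ^ (B.sup id + 1 - B.card) * Sqt (m + 1 - B.card) (k+1)
            = Sqt m (k+1) + qint (k+1) * Sqt m (k+2) := by
          rw [bset_filter_not_mem]
          have step : ∀ B ∈ bset m,
              X ^ (B.sup id + 1 - B.card) * Sqt (m + 1 - B.card) (k+1)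
              = X ^ (B.sup id + 1 - B.card) * Sqt (m - B.card) k
                + qint (k+1) * (X ^ (B.sup id + 1 - B.card) * Sqt (m - B.card) (k+1)) := by
            intro B hB
            have hc := card_le_of_mem_bset hB
            have h1 : m + 1 - B.card = (m - B.card) + 1 := by omega
            rw [h1, Sqt_succ_succ]
            ring
          rw [Finset.sum_congr rfl step, Finset.sum_add_distrib, ← Finset.mul_sum,
            ih hm1 k, ih hm1 (k+1)]
        rw [part2, part1]
        rw [show Sqt (m+1) (k+2) = Sqt m (k+1) + qint (k+2) * Sqt m (k+2) from rfl]
        rw [qint_succ (k+1)]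
        ring

----------------------------------------------------------------
-- Permutation side: the glue construction
----------------------------------------------------------------

lemma pw_lt_iff {n : ℕ} (p : Equiv.Perm (Fin n)) (i j : Fin n) :
    pw p i < pw p j ↔ p i < p j := by
  unfold pw
  rw [Fin.lt_def]
  omega

section Glue

variable {n s b : ℕ} [NeZero n] (B : Finset (Fin n))
  (hs : Bᶜ.card = s) (hb : B.card = b)

def glueFun (p' : Equiv.Perm (Fin s)) : Fin n → Fin n := fun i =>
  if h : (i : ℕ) < s then Bᶜ.orderEmbOfFin hs (p' ⟨i, h⟩)
  else B.orderEmbOfFin hb ⟨(i : ℕ) - s,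
    by
      have h1 := i.isLt
      have h2 : s + b = n := by
        rw [← hs, ← hb, add_comm]
        have := Finset.card_compl_add_card B
        simpa using this
      omega⟩

lemma glueFun_injective (p' : Equiv.Perm (Fin s)) :
    Function.Injective (glueFun B hs hb p') := by
  intro i1 i2 h
  unfold glueFun at h
  by_cases h1 : (i1:ℕ) < s <;> by_cases h2 : (i2:ℕ) < s
  · rw [dif_pos h1, dif_pos h2] at h
    have h3 := p'.injective ((Bᶜ.orderEmbOfFin hs).injective h)
    have h4 : (i1:ℕ) = (i2:ℕ) := by simpa using congrArg Fin.val h3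
    exact Fin.ext h4
  · rw [dif_pos h1, dif_neg h2] at h
    exfalso
    have hm1 := Finset.orderEmbOfFin_mem Bᶜ hs (p' ⟨i1, h1⟩)
    rw [h] at hm1
    exact (Finset.mem_compl.mp hm1) (Finset.orderEmbOfFin_mem B hb _)
  · rw [dif_neg h1, dif_pos h2] at h
    exfalso
    have hm1 := Finset.orderEmbOfFin_mem Bᶜ hs (p' ⟨i2, h2⟩)
    rw [← h] at hm1
    exact (Finset.mem_compl.mp hm1) (Finset.orderEmbOfFin_mem B hb _)
  · rw [dif_neg h1, dif_neg h2] at h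
    have h3 := (B.orderEmbOfFin hb).injective h
    have h4 : (i1:ℕ) - s = (i2:ℕ) - s := by simpa using congrArg Fin.val h3
    exact Fin.ext (by omega)

noncomputable def glue (p' : Equiv.Perm (Fin s)) : Equiv.Perm (Fin n) :=
  Equiv.ofBijective _ (Finite.injective_iff_bijective.mp (glueFun_injective B hs hb p'))

lemma glue_apply (p' : Equiv.Perm (Fin s)) (i : Fin n) :
    glue B hs hb p' i = glueFun B hs hb p' i := rfl

lemma glue_lt (p' : Equiv.Perm (Fin s)) {i : Fin n} (h : (i:ℕ) < s) :
    glue B hs hb p' i = Bᶜ.orderEmbOfFin hs (p' ⟨i, h⟩) := by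
  rw [glue_apply, glueFun, dif_pos h]

lemma glue_ge (p' : Equiv.Perm (Fin s)) {i : Fin n} (h : ¬ (i:ℕ) < s) {t : Fin b}
    (ht : (t : ℕ) = (i:ℕ) - s) :
    glue B hs hb p' i = B.orderEmbOfFin hb t := by
  rw [glue_apply, glueFun, dif_neg h]
  congr 1
  exact Fin.ext ht.symm

end Glue

section Glue2

variable {n s b : ℕ} [NeZero n] {B : Finset (Fin n)}
  {hs : Bᶜ.card = s} {hb : B.card = b}

lemma pw_glue_castLE_lt (p' : Equiv.Perm (Fin s)) (hsle : s ≤ n) (a c : Fin s) :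
    pw (glue B hs hb p') (Fin.castLE hsle a) < pw (glue B hs hb p') (Fin.castLE hsle c)
      ↔ pw p' a < pw p' c := by
  rw [pw_lt_iff, pw_lt_iff]
  rw [glue_lt B hs hb p' (show ((Fin.castLE hsle a) : ℕ) < s from a.isLt),
    glue_lt B hs hb p' (show ((Fin.castLE hsle c) : ℕ) < s from c.isLt)]
  rw [OrderEmbedding.lt_iff_lt]
  simp only [Fin.coe_castLE, Fin.eta]

lemma glue_zero (hsb : s + b = n) (h0 : (0 : Fin n) ∈ B) (p' : Equiv.Perm (Fin s))
    {i : Fin n} (hi : (i : ℕ) = s) :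
    glue B hs hb p' i = 0 := by
  have hb1 : 0 < b := by
    rw [← hb]
    exact Finset.card_pos.mpr ⟨0, h0⟩
  rw [glue_ge B hs hb p' (by omega) (t := ⟨0, hb1⟩) (by simp [hi])]
  rw [Finset.orderEmbOfFin_zero hb hb1]
  exact le_antisymm (Finset.min'_le B 0 h0) (Fin.zero_le _)

lemma glue_suffix_lt (hsb : s + b = n) (p' : Equiv.Perm (Fin s)) {x y : Fin n}
    (hx : ¬ (x:ℕ) < s) (hy : ¬ (y:ℕ) < s) :
    glue B hs hb p' x < glue B hs hb p' y ↔ x < y := by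
  have hx2 := x.isLt
  have hy2 := y.isLt
  rw [glue_ge B hs hb p' hx (t := ⟨(x:ℕ) - s, by omega⟩) rfl,
    glue_ge B hs hb p' hy (t := ⟨(y:ℕ) - s, by omega⟩) rfl]
  rw [OrderEmbedding.lt_iff_lt]
  simp only [Fin.mk_lt_mk, Fin.lt_def]
  omega

lemma pw_ge_one {m : ℕ} (p : Equiv.Perm (Fin m)) (i : Fin m) : 1 ≤ pw p i := by
  simp [pw]

lemma pw_glue_prefix_pos (h0 : (0 : Fin n) ∈ B) (p' : Equiv.Perm (Fin s))
    {i : Fin n} (hi : (i:ℕ) < s) : 1 < pw (glue B hs hb p') i := by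
  have hmem := Finset.orderEmbOfFin_mem Bᶜ hs (p' ⟨(i:ℕ), hi⟩)
  rw [← glue_lt B hs hb p' hi] at hmem
  have hne : glue B hs hb p' i ≠ 0 := by
    intro hq
    rw [hq] at hmem
    exact (Finset.mem_compl.mp hmem) h0
  have hpos : 0 < (glue B hs hb p' i : ℕ) := by
    rcases Nat.eq_zero_or_pos (glue B hs hb p' i : ℕ) with h | h
    · exact absurd (Fin.ext (by simp [h])) hne
    · exact h
  unfold pw
  omega

/-- (A) avoidance transfer -/
lemma avoids_glue_iff (hsb : s + b = n) (h0 : (0 : Fin n) ∈ B) (p' : Equiv.Perm (Fin s)) :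
    Avoids132 (pw (glue B hs hb p')) ↔ Avoids132 (pw p') := by
  have hsle : s ≤ n := by omega
  constructor
  · intro hA i j j' hij hj1
    intro ⟨hc1, hc2⟩
    refine hA (Fin.castLE hsle i) (Fin.castLE hsle j) (Fin.castLE hsle j') ?_ ?_ ?_
    · rw [Fin.lt_def]
      simp only [Fin.coe_castLE]
      exact Fin.lt_def.mp hij
    · simp only [Fin.coe_castLE]
      exact hj1
    · rw [pw_glue_castLE_lt p' hsle, pw_glue_castLE_lt p' hsle]
      exact ⟨hc1, hc2⟩
  · intro hA' i j j' hij hj1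
    intro ⟨hc1, hc2⟩
    by_cases hjs : (j':ℕ) < s
    · -- all indices < s
      have hj : (j:ℕ) < s := by omega
      have hi : (i:ℕ) < s := by
        have := Fin.lt_def.mp hij
        omega
      refine hA' ⟨(i:ℕ), hi⟩ ⟨(j:ℕ), hj⟩ ⟨(j':ℕ), hjs⟩
        (Fin.mk_lt_mk.mpr (Fin.lt_def.mp hij)) hj1 ?_
      have e1 : Fin.castLE hsle (⟨(i:ℕ), hi⟩ : Fin s) = i := Fin.ext rfl
      have e2 : Fin.castLE hsle (⟨(j:ℕ), hj⟩ : Fin s) = j := Fin.ext rfl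
      have e3 : Fin.castLE hsle (⟨(j':ℕ), hjs⟩ : Fin s) = j' := Fin.ext rfl
      rw [← pw_glue_castLE_lt (hs := hs) (hb := hb) p' hsle,
        ← pw_glue_castLE_lt (hs := hs) (hb := hb) p' hsle, e1, e2, e3]
      exact ⟨hc1, hc2⟩
    · by_cases hjeq : (j':ℕ) = s
      · have hz : glue B hs hb p' j' = 0 := glue_zero hsb h0 p' hjeq
        have h1 : pw (glue B hs hb p') j' = 1 := by
          unfold pw
          rw [hz]
          simp
        rw [h1] at hc1
        have := pw_ge_one (glue B hs hb p') i
        omega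
      · have hjge : ¬ (j:ℕ) < s := by omega
        rw [pw_lt_iff] at hc2
        rw [glue_suffix_lt hsb p' hjs hjge] at hc2
        rw [Fin.lt_def] at hc2
        omega

/-- (B) descent transfer -/
lemma des_glue (hsb : s + b = n) (h0 : (0 : Fin n) ∈ B) (hs1 : 0 < s)
    (p' : Equiv.Perm (Fin s)) :
    desW (pw (glue B hs hb p')) = desW (pw p') + 1 := by
  classical
  have hb1 : 0 < b := by
    rw [← hb]; exact Finset.card_pos.mpr ⟨0, h0⟩
  have hsle : s ≤ n := by omega
  have hsn : s < n := by omega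
  unfold desW
  have key : (Finset.univ.filter fun i : Fin n => ∃ j : Fin n, (j:ℕ) = (i:ℕ)+1 ∧
        pw (glue B hs hb p') j < pw (glue B hs hb p') i)
      = insert (⟨s - 1, by omega⟩ : Fin n) (((Finset.univ.filter
          fun i : Fin s => ∃ j : Fin s, (j:ℕ) = (i:ℕ)+1 ∧ pw p' j < pw p' i)).map
            (Fin.castLEEmb hsle)) := by
    ext x
    simp only [Finset.mem_insert, Finset.mem_map, Finset.mem_filter, Finset.mem_univ,
      true_and, Fin.coe_castLEEmb]
    rcases lt_trichotomy ((x:ℕ)) (s-1) with hx | hx | hx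
    · constructor
      · rintro ⟨j, hj1, hj2⟩
        refine Or.inr ⟨⟨(x:ℕ), by omega⟩, ⟨⟨(j:ℕ), by omega⟩, by simpa using hj1, ?_⟩,
          Fin.ext rfl⟩
        have e1 : Fin.castLE hsle (⟨(x:ℕ), by omega⟩ : Fin s) = x := Fin.ext rfl
        have e2 : Fin.castLE hsle (⟨(j:ℕ), by omega⟩ : Fin s) = j := Fin.ext rfl
        rw [← pw_glue_castLE_lt p' hsle, e1, e2]
        exact hj2
      · rintro (hx1 | ⟨y, ⟨⟨j, hj1, hj2⟩, hy⟩⟩)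
        · exfalso
          have h := congrArg Fin.val hx1
          simp only [] at h
          omega
        · have hyx : (y : ℕ) = (x : ℕ) := by
            have := congrArg Fin.val hy
            simpa using this
          refine ⟨Fin.castLE hsle j, by simp; omega, ?_⟩
          have hy' : Fin.castLE hsle y = x := hy
          rw [← hy']
          rw [pw_glue_castLE_lt p' hsle]
          exact hj2
    · constructor
      · intro _
        exact Or.inl (Fin.ext (by simpa using hx))
      · intro hdum
        clear hdum
        refine ⟨⟨s, hsn⟩, show (s:ℕ) = (x:ℕ) + 1 by omega, ?_⟩
        have hz : pw (glue B hs hb p') ⟨s, hsn⟩ = 1 := by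
          unfold pw
          rw [glue_zero hsb h0 p' (i := ⟨s, hsn⟩) rfl]
          simp
        rw [hz]
        exact pw_glue_prefix_pos h0 p' (by omega)
    · constructor
      · rintro ⟨j, hj1, hj2⟩
        exfalso
        have hxge : ¬ (x:ℕ) < s := by omega
        have hjge : ¬ (j:ℕ) < s := by omega
        rw [pw_lt_iff, glue_suffix_lt hsb p' hjge hxge, Fin.lt_def] at hj2
        omega
      · rintro (hx1 | ⟨y, ⟨_, hy⟩⟩)
        · exfalso
          have h := congrArg Fin.val hx1
          simp only [] at h
          omega
        · exfalso
          have h := congrArg Fin.val hy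
          simp only [Fin.coe_castLE, Fin.coe_castLEEmb] at h
          have := y.isLt
          omega
  rw [key, Finset.card_insert_of_notMem, Finset.card_map, add_comm]
  intro hmem
  simp only [Finset.mem_map, Finset.mem_filter, Finset.mem_univ, true_and,
    Fin.coe_castLEEmb] at hmem
  obtain ⟨y, ⟨⟨j, hj1, _⟩, hy⟩⟩ := hmem
  have hv := congrArg Fin.val hy
  simp only [Fin.coe_castLE] at hv
  have := j.isLt
  omega

end Glue2

section Glue3

variable {n s b : ℕ} [NeZero n] {B : Finset (Fin n)}
  {hs : Bᶜ.card = s} {hb : B.card = b}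

lemma embB_zero (h0 : (0 : Fin n) ∈ B) (hb1 : 0 < b) :
    B.orderEmbOfFin hb ⟨0, hb1⟩ = 0 := by
  rw [Finset.orderEmbOfFin_zero hb hb1]
  exact le_antisymm (Finset.min'_le B 0 h0) (Fin.zero_le _)

lemma cross_fact (hsb : s + b = n) (h0 : (0 : Fin n) ∈ B) (p' : Equiv.Perm (Fin s))
    {q : Fin n × Fin n}
    (hcnd : q.1 < q.2 ∧ ∃ j' : Fin n, (j' : ℕ) = (q.2 : ℕ) + 1 ∧
      pw (glue B hs hb p') q.2 < pw (glue B hs hb p') q.1 ∧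
      pw (glue B hs hb p') q.1 < pw (glue B hs hb p') j')
    (hnc : ¬ ((q.2 : ℕ) + 1 < s)) :
    ∃ t t1 : Fin b, (t : ℕ) = (q.2 : ℕ) - s ∧ (t1 : ℕ) = (t : ℕ) + 1 ∧
      (q.1 : ℕ) < s ∧ s ≤ (q.2 : ℕ) ∧
      B.orderEmbOfFin hb t < glue B hs hb p' q.1 ∧
      glue B hs hb p' q.1 < B.orderEmbOfFin hb t1 := by
  obtain ⟨hlt, j', hj', h21, h13⟩ := hcnd
  have hj'lt := j'.isLt
  have hq2lt := q.2.isLt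
  have hq2 : ¬ (q.2 : ℕ) < s := by
    intro hq2
    have hz : pw (glue B hs hb p') j' = 1 := by
      unfold pw
      rw [glue_zero hsb h0 p' (by omega)]
      simp
    rw [hz] at h13
    have := pw_ge_one (glue B hs hb p') q.1
    omega
  have hq1 : (q.1 : ℕ) < s := by
    by_contra hq1
    rw [pw_lt_iff, glue_suffix_lt hsb p' hq2 hq1] at h21
    have := Fin.lt_def.mp hlt
    have := Fin.lt_def.mp h21
    omega
  refine ⟨⟨(q.2 : ℕ) - s, by omega⟩, ⟨(q.2 : ℕ) + 1 - s, by omega⟩, rfl, by simp; omega,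
    hq1, by omega, ?_, ?_⟩
  · rw [pw_lt_iff] at h21
    rw [glue_ge B hs hb p' hq2 (t := ⟨(q.2 : ℕ) - s, by omega⟩) rfl] at h21
    exact h21
  · rw [pw_lt_iff] at h13
    rw [glue_ge B hs hb p' (i := j') (by omega) (t := ⟨(q.2 : ℕ) + 1 - s, by omega⟩)
      (by show (q.2 : ℕ) + 1 - s = (j' : ℕ) - s; omega)] at h13
    exact h13

set_option maxHeartbeats 1000000 in
/-- (C) pattern-count transfer -/
lemma pat_glue (hsb : s + b = n) (h0 : (0 : Fin n) ∈ B) (p' : Equiv.Perm (Fin s)) :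
    pat2_13 (pw (glue B hs hb p'))
      = pat2_13 (pw p') + ((B.max' ⟨0, h0⟩ : ℕ) + 1 - b) := by
  classical
  have hb1 : 0 < b := by rw [← hb]; exact Finset.card_pos.mpr ⟨0, h0⟩
  have hsle : s ≤ n := by omega
  rw [show pat2_13 (pw (glue B hs hb p')) = ((Finset.univ ×ˢ Finset.univ).filter
      fun q : Fin n × Fin n => q.1 < q.2 ∧ ∃ j' : Fin n, (j' : ℕ) = (q.2 : ℕ) + 1 ∧
        pw (glue B hs hb p') q.2 < pw (glue B hs hb p') q.1 ∧
        pw (glue B hs hb p') q.1 < pw (glue B hs hb p') j').card from rfl]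
  rw [← Finset.card_filter_add_card_filter_not
    (p := fun q : Fin n × Fin n => (q.2 : ℕ) + 1 < s)]
  congr 1
  · -- prefix pairs
    rw [show pat2_13 (pw p') = ((Finset.univ ×ˢ Finset.univ).filter
        fun q : Fin s × Fin s => q.1 < q.2 ∧ ∃ j' : Fin s, (j' : ℕ) = (q.2 : ℕ) + 1 ∧
          pw p' q.2 < pw p' q.1 ∧ pw p' q.1 < pw p' j').card from rfl]
    have bound : ∀ q : Fin n × Fin n, q ∈ (((Finset.univ ×ˢ Finset.univ).filter
        fun q : Fin n × Fin n => q.1 < q.2 ∧ ∃ j' : Fin n, (j' : ℕ) = (q.2 : ℕ) + 1 ∧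
          pw (glue B hs hb p') q.2 < pw (glue B hs hb p') q.1 ∧
          pw (glue B hs hb p') q.1 < pw (glue B hs hb p') j').filter
            (fun q => (q.2 : ℕ) + 1 < s)) →
        (q.1 : ℕ) < s ∧ (q.2 : ℕ) + 1 < s := by
      intro q hq
      simp only [Finset.mem_filter] at hq
      obtain ⟨⟨_, hlt, _⟩, hc⟩ := hq
      exact ⟨by have := Fin.lt_def.mp hlt; omega, hc⟩
    apply Finset.card_bij (i := fun q hq =>
      ((⟨(q.1 : ℕ), (bound q hq).1⟩ : Fin s),
       (⟨(q.2 : ℕ), by have := (bound q hq).2; omega⟩ : Fin s)))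
    · intro q hq
      have hbd := bound q hq
      simp only [Finset.mem_filter, Finset.mem_product, Finset.mem_univ, true_and] at hq ⊢
      obtain ⟨⟨hlt, j', hj', h21, h13⟩, hc⟩ := hq
      refine ⟨Fin.mk_lt_mk.mpr (Fin.lt_def.mp hlt), ⟨(q.2 : ℕ) + 1, hc⟩, rfl, ?_, ?_⟩
      · have e1 : Fin.castLE hsle (⟨(q.1 : ℕ), hbd.1⟩ : Fin s) = q.1 := Fin.ext rfl
        have e2 : Fin.castLE hsle (⟨(q.2 : ℕ), by have := hbd.2; omega⟩ : Fin s) = q.2 :=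
          Fin.ext rfl
        rw [← pw_glue_castLE_lt p' hsle, e1, e2]
        exact h21
      · have e1 : Fin.castLE hsle (⟨(q.1 : ℕ), hbd.1⟩ : Fin s) = q.1 := Fin.ext rfl
        have e3 : Fin.castLE hsle (⟨(q.2 : ℕ) + 1, hc⟩ : Fin s) = j' :=
          Fin.ext (by simp [hj'])
        rw [← pw_glue_castLE_lt p' hsle, e1, e3]
        exact h13
    · intro q1 h1 q2 h2 heq
      have e := Prod.ext_iff.mp heq
      have e1 : (q1.1 : ℕ) = (q2.1 : ℕ) := by simpa using congrArg Fin.val e.1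
      have e2 : (q1.2 : ℕ) = (q2.2 : ℕ) := by simpa using congrArg Fin.val e.2
      exact Prod.ext (Fin.ext e1) (Fin.ext e2)
    · intro r hr
      simp only [Finset.mem_filter, Finset.mem_product, Finset.mem_univ, true_and] at hr
      obtain ⟨hlt, j'', hj'', h21, h13⟩ := hr
      have hr2 : (r.2 : ℕ) + 1 < s := by have := j''.isLt; omega
      have hr1 : (r.1 : ℕ) < s := by have := Fin.lt_def.mp hlt; omega
      refine ⟨(Fin.castLE hsle r.1, Fin.castLE hsle r.2), ?_, ?_⟩
      · simp only [Finset.mem_filter, Finset.mem_product, Finset.mem_univ, true_and]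
        refine ⟨⟨?_, ⟨Fin.castLE hsle ⟨(r.2 : ℕ) + 1, hr2⟩, ?_, ?_, ?_⟩⟩, ?_⟩
        · rw [Fin.lt_def]
          simpa using Fin.lt_def.mp hlt
        · simp
        · rw [pw_glue_castLE_lt p' hsle]
          exact h21
        · have ej : (⟨(r.2 : ℕ) + 1, hr2⟩ : Fin s) = j'' :=
            Fin.ext (by show (r.2 : ℕ) + 1 = (j'' : ℕ); omega)
          rw [pw_glue_castLE_lt p' hsle, ej]
          exact h13
        · simpa using hr2
      · exact Prod.ext (Fin.ext rfl) (Fin.ext rfl)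
  · -- cross pairs
    have hTcard : ((Bᶜ).filter (fun c => c < B.max' ⟨0, h0⟩)).card
        = (B.max' ⟨0, h0⟩ : ℕ) + 1 - b := by
      have hIio : (Finset.Iio (B.max' ⟨0, h0⟩)).card = (B.max' ⟨0, h0⟩ : ℕ) := by
        exact Fin.card_Iio _
      have hsplit := Finset.card_filter_add_card_filter_not
        (s := Finset.Iio (B.max' ⟨0, h0⟩)) (p := fun x => x ∈ B)
      have h2 : (Finset.Iio (B.max' ⟨0, h0⟩)).filter (fun x => x ∈ B)
          = B.erase (B.max' ⟨0, h0⟩) := by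
        ext x
        simp only [Finset.mem_filter, Finset.mem_Iio, Finset.mem_erase]
        constructor
        · rintro ⟨hlt, hxB⟩
          exact ⟨ne_of_lt hlt, hxB⟩
        · rintro ⟨hne, hxB⟩
          exact ⟨lt_of_le_of_ne (Finset.le_max' B x hxB) hne, hxB⟩
      have h3 : (Finset.Iio (B.max' ⟨0, h0⟩)).filter (fun x => ¬ x ∈ B)
          = (Bᶜ).filter (fun c => c < B.max' ⟨0, h0⟩) := by
        ext x
        simp only [Finset.mem_filter, Finset.mem_Iio, Finset.mem_compl]
        tauto
      rw [h2, h3] at hsplit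
      have h4 : (B.erase (B.max' ⟨0, h0⟩)).card = b - 1 := by
        exact (Finset.card_erase_of_mem (B.max'_mem _)).trans (by rw [hb])
      omega
    rw [← hTcard]
    apply Finset.card_bij (i := fun q _ => glue B hs hb p' q.1)
    · intro q hq
      simp only [Finset.mem_filter] at hq
      obtain ⟨t, t1, ht, ht1, hq1, hq2, hlo, hhi⟩ :=
        cross_fact hsb h0 p' (by simpa [Finset.mem_filter, Finset.mem_product] using hq.1) hq.2
      simp only [Finset.mem_filter]
      constructor
      · rw [glue_lt B hs hb p' hq1]
        exact Finset.orderEmbOfFin_mem Bᶜ hs _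
      · exact lt_of_lt_of_le hhi (Finset.le_max' B _ (Finset.orderEmbOfFin_mem B hb _))
    · intro q1 hq1 q2 hq2 heq
      simp only [Finset.mem_filter] at hq1 hq2
      obtain ⟨ta, t1a, hta, ht1a, ha1, ha2, hloa, hhia⟩ :=
        cross_fact hsb h0 p' (by simpa [Finset.mem_filter, Finset.mem_product] using hq1.1) hq1.2
      obtain ⟨tb, t1b, htb, ht1b, hb1', hb2, hlob, hhib⟩ :=
        cross_fact hsb h0 p' (by simpa [Finset.mem_filter, Finset.mem_product] using hq2.1) hq2.2
      have hfst : q1.1 = q2.1 := (glue B hs hb p').injective heq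
      have hsnd : (q1.2 : ℕ) = (q2.2 : ℕ) := by
        rcases lt_trichotomy ((q1.2 : ℕ)) ((q2.2 : ℕ)) with hcmp | hcmp | hcmp
        · exfalso
          have hle : t1a ≤ tb := by
            rw [Fin.le_def]
            omega
          have := (B.orderEmbOfFin hb).monotone hle
          rw [heq] at hhia
          have := lt_of_le_of_lt (lt_of_lt_of_le hhia this).le hlob
          exact lt_irrefl _ this
        · exact hcmp
        · exfalso
          have hle : t1b ≤ ta := by
            rw [Fin.le_def]
            omega
          have := (B.orderEmbOfFin hb).monotone hle
          rw [← heq] at hhib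
          have := lt_of_le_of_lt (lt_of_lt_of_le hhib this).le hloa
          exact lt_irrefl _ this
      exact Prod.ext hfst (Fin.ext hsnd)
    · intro c hc
      simp only [Finset.mem_filter] at hc
      obtain ⟨hcC, hcM⟩ := hc
      have hrange : ∃ m : Fin s, Bᶜ.orderEmbOfFin hs m = c := by
        have h2 : c ∈ Set.range ⇑(Bᶜ.orderEmbOfFin hs) := by
          rw [Finset.range_orderEmbOfFin]
          exact_mod_cast hcC
        exact Set.mem_range.mp h2
      obtain ⟨m, hm⟩ := hrange
      have hisl : ((p'.symm m : ℕ)) < s := (p'.symm m).isLt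
      have hglue_i : glue B hs hb p' ⟨((p'.symm m) : ℕ), by omega⟩ = c := by
        rw [glue_lt B hs hb p' (show ((⟨((p'.symm m) : ℕ), by omega⟩ : Fin n) : ℕ) < s from hisl)]
        have e : (⟨((⟨((p'.symm m) : ℕ), by omega⟩ : Fin n) : ℕ), hisl⟩ : Fin s) = p'.symm m :=
          Fin.ext rfl
        rw [e, Equiv.apply_symm_apply, hm]
      have hQne : (Finset.univ.filter (fun t : Fin b => B.orderEmbOfFin hb t < c)).Nonempty := by
        refine ⟨⟨0, hb1⟩, ?_⟩
        simp only [Finset.mem_filter, Finset.mem_univ, true_and]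
        rw [embB_zero h0 hb1]
        have hne : c ≠ 0 := by
          intro h
          rw [h] at hcC
          exact (Finset.mem_compl.mp hcC) h0
        exact lt_of_le_of_ne (Fin.zero_le c) (Ne.symm hne)
      obtain ⟨t0, ht0lt, ht0max⟩ : ∃ t0 : Fin b, B.orderEmbOfFin hb t0 < c ∧
          ∀ t : Fin b, B.orderEmbOfFin hb t < c → t ≤ t0 := by
        refine ⟨(Finset.univ.filter (fun t : Fin b => B.orderEmbOfFin hb t < c)).max' hQne,
          ?_, ?_⟩
        · have := Finset.max'_mem _ hQne
          simpa [Finset.mem_filter] using this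
        · intro t ht
          refine Finset.le_max' _ t ?_
          simp only [Finset.mem_filter, Finset.mem_univ, true_and]
          exact ht
      have ht0top : (t0 : ℕ) < b - 1 := by
        have hbb := t0.isLt
        rcases Nat.lt_or_ge (t0 : ℕ) (b-1) with h | h
        · exact h
        · exfalso
          have he : t0 = ⟨b - 1, by omega⟩ := Fin.ext (by show (t0 : ℕ) = b - 1; omega)
          have hlast := Finset.orderEmbOfFin_last hb hb1
          rw [he, hlast] at ht0lt
          exact absurd hcM (not_lt.mpr ht0lt.le)
      have hct1 : c < B.orderEmbOfFin hb ⟨(t0 : ℕ) + 1, by omega⟩ := by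
        have hnotin : ¬ B.orderEmbOfFin hb ⟨(t0 : ℕ) + 1, by omega⟩ < c := by
          intro hcon
          have hle := ht0max _ hcon
          have := Fin.le_def.mp hle
          simp only [Fin.val_mk] at this
          omega
        have hne : c ≠ B.orderEmbOfFin hb ⟨(t0 : ℕ) + 1, by omega⟩ := by
          intro h
          have hmem := Finset.orderEmbOfFin_mem B hb ⟨(t0 : ℕ) + 1, by omega⟩
          rw [← h] at hmem
          exact (Finset.mem_compl.mp hcC) hmem
        exact lt_of_le_of_ne (not_lt.mp hnotin) hne
      refine ⟨(⟨((p'.symm m) : ℕ), by omega⟩, ⟨s + (t0 : ℕ), by omega⟩), ?_, hglue_i⟩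
      simp only [Finset.mem_filter, Finset.mem_product, Finset.mem_univ, true_and]
      refine ⟨⟨?_, ⟨⟨s + (t0 : ℕ) + 1, by omega⟩,
        show s + (t0 : ℕ) + 1 = (s + (t0 : ℕ)) + 1 from rfl, ?_, ?_⟩⟩,
        show ¬ ((s + (t0 : ℕ)) + 1 < s) by omega⟩
      · exact Fin.mk_lt_mk.mpr (by omega)
      · rw [pw_lt_iff, hglue_i]
        rw [glue_ge B hs hb p' (i := ⟨s + (t0 : ℕ), by omega⟩)
          (show ¬ (s + (t0 : ℕ) < s) by omega) (t := t0)
          (show (t0 : ℕ) = s + (t0 : ℕ) - s by omega)]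
        exact ht0lt
      · rw [pw_lt_iff, hglue_i]
        rw [glue_ge B hs hb p' (i := ⟨s + (t0 : ℕ) + 1, by omega⟩)
          (show ¬ (s + (t0 : ℕ) + 1 < s) by omega) (t := ⟨(t0 : ℕ) + 1, by omega⟩)
          (show (t0 : ℕ) + 1 = s + (t0 : ℕ) + 1 - s by omega)]
        exact hct1

end Glue3

section Suffix

variable {n : ℕ} [NeZero n]

/-- chaining consecutive increases -/
lemma strictmono_chain {m : ℕ} {α : Type*} [Preorder α] {f : Fin m → α}
    (h : ∀ (j : ℕ) (hj : j + 1 < m), f ⟨j, by omega⟩ < f ⟨j+1, hj⟩) :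
    ∀ a c : Fin m, a < c → f a < f c := by
  suffices H : ∀ k (c : Fin m), (c:ℕ) ≤ k → ∀ a : Fin m, a < c → f a < f c by
    intro a c hac
    exact H (c:ℕ) c le_rfl a hac
  intro k
  induction k with
  | zero =>
    intro c hc a hac
    have := Fin.lt_def.mp hac
    omega
  | succ k ih =>
    intro c hc a hac
    have hlt := Fin.lt_def.mp hac
    rcases Nat.lt_or_ge (c:ℕ) (k+1) with h1 | h1
    · exact ih c (by omega) a hac
    · have hceq : (c:ℕ) = k+1 := by omega
      rcases Nat.lt_or_ge ((a:ℕ)+1) (c:ℕ) with h2 | h2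
      · have hk1 : k + 1 < m := by have := c.isLt; omega
        have hmid : f ⟨k, by omega⟩ < f c := by
          have hcons := h k hk1
          have he : (⟨k+1, hk1⟩ : Fin m) = c := Fin.ext (by show k + 1 = (c:ℕ); omega)
          rwa [he] at hcons
        have hfirst : f a < f ⟨k, by omega⟩ :=
          ih ⟨k, by omega⟩ (by simp) a (by rw [Fin.lt_def]; show (a:ℕ) < k; omega)
        exact lt_trans hfirst hmid
      · have ha1 : (a:ℕ) + 1 < m := by have := c.isLt; omega
        have hcons := h (a:ℕ) ha1
        have he : (⟨(a:ℕ)+1, ha1⟩ : Fin m) = c := Fin.ext (by show (a:ℕ) + 1 = (c:ℕ); omega)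
        have he2 : (⟨(a:ℕ), by omega⟩ : Fin m) = a := Fin.ext rfl
        rwa [he, he2] at hcons

/-- one-step increase after the position of the letter 1 -/
lemma suffix_lt {p : Equiv.Perm (Fin n)} (hA : Avoids132 (pw p)) {j : Fin n}
    (hj : p.symm 0 ≤ j) (h1 : (j:ℕ)+1 < n) : p j < p ⟨(j:ℕ)+1, h1⟩ := by
  set j' : Fin n := ⟨(j:ℕ)+1, h1⟩ with hj'def
  have hne : p j ≠ p j' := by
    intro h
    have h2 := p.injective h
    have := congrArg Fin.val h2
    simp [hj'def] at this
  rcases lt_or_gt_of_ne hne with h | h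
  · exact h
  exfalso
  rcases eq_or_lt_of_le hj with heq | hlt
  · have hpj : p j = 0 := by rw [← heq]; simp
    rw [hpj] at h
    exact absurd h (not_lt.mpr (Fin.zero_le _))
  · have hA' := hA (p.symm 0) j j' hlt rfl
    apply hA'
    constructor
    · unfold pw
      have hz : p (p.symm 0) = 0 := Equiv.apply_symm_apply p 0
      rw [hz]
      have hj'0 : p j' ≠ 0 := by
        intro hq
        have : j' = p.symm 0 := by
          rw [← hq, Equiv.symm_apply_apply]
        have hv := congrArg Fin.val this
        have hv2 := Fin.lt_def.mp hlt
        simp [hj'def] at hv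
        omega
      have : 0 < (p j' : ℕ) := by
        rcases Nat.eq_zero_or_pos (p j' : ℕ) with hq | hq
        · exact absurd (Fin.ext (by simpa using hq)) hj'0
        · exact hq
      simp only [Fin.val_zero]
      omega
    · exact (pw_lt_iff p j' j).mpr h

/-- permutations whose word has no descent are the identity -/
lemma eq_one_of_desW_zero {p : Equiv.Perm (Fin n)} (hdes : desW (pw p) = 0) :
    p = 1 := by
  classical
  have hcons : ∀ (j : ℕ) (hj : j + 1 < n), p ⟨j, by omega⟩ < p ⟨j+1, hj⟩ := by
    intro j hj
    by_contra hcon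
    have hne : p ⟨j, by omega⟩ ≠ p ⟨j+1, hj⟩ := by
      intro h
      have h2 := p.injective h
      have := congrArg Fin.val h2
      simp at this
    have hlt : p ⟨j+1, hj⟩ < p ⟨j, by omega⟩ := by
      rcases lt_or_gt_of_ne hne with h | h
      · exact absurd h hcon
      · exact h
    have hmem : (⟨j, by omega⟩ : Fin n) ∈ Finset.univ.filter
        (fun i : Fin n => ∃ j2 : Fin n, (j2 : ℕ) = (i : ℕ) + 1 ∧ pw p j2 < pw p i) := by
      simp only [Finset.mem_filter, Finset.mem_univ, true_and]
      exact ⟨⟨j+1, hj⟩, by simp, (pw_lt_iff p _ _).mpr hlt⟩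
    unfold desW at hdes
    rw [Finset.card_eq_zero] at hdes
    rw [hdes] at hmem
    simp at hmem
  have hmono : StrictMono (⇑p) := by
    intro a c hac
    exact strictmono_chain hcons a c hac
  have hcard : (Finset.univ : Finset (Fin n)).card = n := by simp
  have h1 : ⇑p = Finset.univ.orderEmbOfFin hcard :=
    Finset.orderEmbOfFin_unique hcard (fun x => Finset.mem_univ _) hmono
  have h2 : (id : Fin n → Fin n) = Finset.univ.orderEmbOfFin hcard :=
    Finset.orderEmbOfFin_unique hcard (fun x => Finset.mem_univ _) strictMono_id
  apply Equiv.ext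
  intro i
  have := congrFun (h1.trans h2.symm) i
  simpa using this

def Bof (p : Equiv.Perm (Fin n)) : Finset (Fin n) :=
  Finset.univ.filter (fun v => p.symm 0 ≤ p.symm v)

lemma zero_mem_Bof (p : Equiv.Perm (Fin n)) : (0 : Fin n) ∈ Bof p := by
  simp [Bof]

lemma Bof_card (p : Equiv.Perm (Fin n)) : (Bof p).card = n - (p.symm 0 : ℕ) := by
  have himg : Bof p = (Finset.Ici (p.symm 0)).image p := by
    ext v
    simp only [Bof, Finset.mem_filter, Finset.mem_univ, true_and, Finset.mem_image,
      Finset.mem_Ici]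
    constructor
    · intro h
      exact ⟨p.symm v, h, by simp⟩
    · rintro ⟨i, hi, rfl⟩
      simpa using hi
  rw [himg, Finset.card_image_of_injective _ p.injective, Fin.card_Ici]

/-- no descents at all when the letter 1 is first -/
lemma desW_zero_of_pos_zero {p : Equiv.Perm (Fin n)} (hA : Avoids132 (pw p))
    (hpos : ((p.symm 0 : Fin n) : ℕ) = 0) : desW (pw p) = 0 := by
  classical
  unfold desW
  rw [Finset.card_eq_zero, Finset.filter_eq_empty_iff]
  intro i _
  rintro ⟨j, hj, hlt⟩
  have h1 : (i:ℕ) + 1 < n := by have := j.isLt; omega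
  have hle : p.symm 0 ≤ i := by
    rw [Fin.le_def]
    omega
  have := suffix_lt hA hle h1
  have hej : (⟨(i:ℕ)+1, h1⟩ : Fin n) = j := Fin.ext (by show (i:ℕ) + 1 = (j:ℕ); omega)
  rw [hej] at this
  rw [pw_lt_iff] at hlt
  exact absurd this (not_lt.mpr hlt.le)

end Suffix

section Unglue

variable {n s b : ℕ} [NeZero n] {B : Finset (Fin n)}

lemma prefix_mem_compl {p : Equiv.Perm (Fin n)} (hBof : Bof p = B)
    (hpos : ((p.symm 0 : Fin n) : ℕ) = s) {i : Fin n} (hi : (i:ℕ) < s) : p i ∈ Bᶜ := by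
  rw [Finset.mem_compl, ← hBof, Bof, Finset.mem_filter]
  rintro ⟨-, hle⟩
  rw [Equiv.symm_apply_apply] at hle
  have := Fin.le_def.mp hle
  omega

lemma pos_eq (hb' : B.card = b) (hsb : s + b = n) {p : Equiv.Perm (Fin n)}
    (hBof : Bof p = B) : ((p.symm 0 : Fin n) : ℕ) = s := by
  have h1 := Bof_card p
  rw [hBof, hb'] at h1
  have := (p.symm 0).isLt
  omega

noncomputable def unglue (hs : Bᶜ.card = s) (p : Equiv.Perm (Fin n)) (hBof : Bof p = B)
    (hpos : ((p.symm 0 : Fin n) : ℕ) = s) : Equiv.Perm (Fin s) :=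
  Equiv.ofBijective (fun i => (Bᶜ.orderIsoOfFin hs).symm
    ⟨p ⟨(i:ℕ), by have := (p.symm 0).isLt; omega⟩,
      prefix_mem_compl hBof hpos i.isLt⟩)
    (Finite.injective_iff_bijective.mp (by
      intro i1 i2 h
      have h2 := (Bᶜ.orderIsoOfFin hs).symm.injective h
      have h3 := Subtype.ext_iff.mp h2
      have h4 := p.injective h3
      have h5 := congrArg Fin.val h4
      exact Fin.ext (by simpa using h5)))

lemma unglue_apply (hs : Bᶜ.card = s) (p : Equiv.Perm (Fin n)) (hBof : Bof p = B)
    (hpos : ((p.symm 0 : Fin n) : ℕ) = s) (i : Fin s) (hin : (i : ℕ) < n) :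
    (Bᶜ.orderEmbOfFin hs) (unglue hs p hBof hpos i) = p ⟨(i:ℕ), hin⟩ := by
  show (Bᶜ.orderEmbOfFin hs) ((Bᶜ.orderIsoOfFin hs).symm
    ⟨p ⟨(i:ℕ), by have := (p.symm 0).isLt; omega⟩, prefix_mem_compl hBof hpos i.isLt⟩)
      = p ⟨(i:ℕ), hin⟩
  rw [← Finset.coe_orderIsoOfFin_apply, OrderIso.apply_symm_apply]

lemma glue_unglue (hs : Bᶜ.card = s) (hb : B.card = b) (hsb : s + b = n)
    {p : Equiv.Perm (Fin n)} (hA : Avoids132 (pw p))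
    (hBof : Bof p = B) (hpos : ((p.symm 0 : Fin n) : ℕ) = s) :
    glue B hs hb (unglue hs p hBof hpos) = p := by
  apply Equiv.ext
  intro i
  by_cases hi : (i:ℕ) < s
  · rw [glue_lt B hs hb _ hi]
    rw [unglue_apply hs p hBof hpos ⟨(i:ℕ), hi⟩ i.isLt]
  · have hiv := i.isLt
    rw [glue_ge B hs hb _ hi (t := ⟨(i:ℕ) - s, by omega⟩) rfl]
    have hf : ∀ t : Fin b,
        (fun t : Fin b => p ⟨s + (t:ℕ), by have := t.isLt; omega⟩) t ∈ B := by
      intro t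
      rw [← hBof, Bof, Finset.mem_filter]
      refine ⟨Finset.mem_univ _, ?_⟩
      rw [Equiv.symm_apply_apply, Fin.le_def]
      show ((p.symm 0 : Fin n) : ℕ) ≤ s + (t : ℕ)
      omega
    have hmono : StrictMono (fun t : Fin b => p ⟨s + (t:ℕ), by have := t.isLt; omega⟩) := by
      intro t1 t2 hlt12
      refine strictmono_chain
        (f := fun t : Fin b => p ⟨s + (t:ℕ), by have := t.isLt; omega⟩) ?_ t1 t2 hlt12
      intro j hj
      have hle : p.symm 0 ≤ (⟨s + j, by omega⟩ : Fin n) := by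
        rw [Fin.le_def]
        show ((p.symm 0 : Fin n) : ℕ) ≤ s + j
        omega
      have hstep := suffix_lt hA hle (show (s+j)+1 < n by omega)
      have he1 : (⟨s + (j+1), by omega⟩ : Fin n) = ⟨(s+j)+1, by omega⟩ :=
        Fin.ext (by show s + (j+1) = (s+j)+1; omega)
      simp only []
      rw [he1]
      exact hstep
    have huniq := Finset.orderEmbOfFin_unique hb hf hmono
    have happ := congrFun huniq ⟨(i:ℕ) - s, by omega⟩
    simp only [] at happ
    rw [← happ]
    congr 1
    exact Fin.ext (by show s + ((i:ℕ) - s) = (i:ℕ); omega)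

lemma Bof_glue (hs : Bᶜ.card = s) (hb : B.card = b) (hsb : s + b = n)
    (h0 : (0 : Fin n) ∈ B) (p' : Equiv.Perm (Fin s)) :
    Bof (glue B hs hb p') = B := by
  have hb1 : 0 < b := by rw [← hb]; exact Finset.card_pos.mpr ⟨0, h0⟩
  have hsn : s < n := by omega
  have hsymm0 : (glue B hs hb p').symm 0 = ⟨s, hsn⟩ := by
    rw [Equiv.symm_apply_eq]
    exact (glue_zero hsb h0 p' rfl).symm
  ext v
  rw [Bof, Finset.mem_filter]
  simp only [Finset.mem_univ, true_and]
  rw [hsymm0]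
  constructor
  · intro hle
    have hge : ¬ (((glue B hs hb p').symm v : Fin n) : ℕ) < s := by
      have h := Fin.le_def.mp hle
      have h2 : ((⟨s, hsn⟩ : Fin n) : ℕ) = s := rfl
      omega
    have happ : glue B hs hb p' ((glue B hs hb p').symm v) = v := Equiv.apply_symm_apply _ _
    rw [glue_ge B hs hb p' hge
      (t := ⟨(((glue B hs hb p').symm v : Fin n) : ℕ) - s, by
        have := ((glue B hs hb p').symm v).isLt; omega⟩) rfl] at happ
    rw [← happ]
    exact Finset.orderEmbOfFin_mem B hb _
  · intro hv
    obtain ⟨t, ht⟩ : ∃ t : Fin b, B.orderEmbOfFin hb t = v := by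
      have h2 : v ∈ Set.range ⇑(B.orderEmbOfFin hb) := by
        rw [Finset.range_orderEmbOfFin]
        exact_mod_cast hv
      exact Set.mem_range.mp h2
    have hgt : glue B hs hb p' ⟨s + (t:ℕ), by have := t.isLt; omega⟩ = v := by
      rw [glue_ge B hs hb p' (show ¬ (s + (t:ℕ) < s) by omega) (t := t)
        (show (t:ℕ) = s + (t:ℕ) - s by omega)]
      exact ht
    rw [← hgt, Equiv.symm_apply_apply, Fin.le_def]
    show s ≤ s + (t : ℕ)
    omega

open Polynomial in
open scoped Classical in
lemma fiber_sum (hs : Bᶜ.card = s) (hb : B.card = b) (hsb : s + b = n)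
    (h0 : (0 : Fin n) ∈ B) (hs1 : 0 < s) (k : ℕ) (hk : 2 ≤ k) :
    ∑ p ∈ (Finset.univ.filter (fun p : Equiv.Perm (Fin n) =>
        (Avoids132 (pw p) ∧ desW (pw p) = k - 1) ∧ Bof p = B)),
      (X : Polynomial ℚ) ^ pat2_13 (pw p)
    = X ^ ((B.max' ⟨0, h0⟩ : ℕ) + 1 - b) *
      ∑ p' ∈ (Finset.univ.filter (fun p' : Equiv.Perm (Fin s) =>
        Avoids132 (pw p') ∧ desW (pw p') = (k - 1) - 1)),
        (X : Polynomial ℚ) ^ pat2_13 (pw p') := by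
  rw [Finset.mul_sum]
  refine Finset.sum_bij'
    (i := fun p hp => unglue hs p (Finset.mem_filter.mp hp).2.2
      (pos_eq hb hsb (Finset.mem_filter.mp hp).2.2))
    (j := fun p' _ => glue B hs hb p') ?_ ?_ ?_ ?_ ?_
  · intro p hp
    obtain ⟨-, ⟨hA, hdes⟩, hBof⟩ := Finset.mem_filter.mp hp
    have hpos := pos_eq hb hsb hBof
    have hglue := glue_unglue hs hb hsb hA hBof hpos
    rw [Finset.mem_filter]
    refine ⟨Finset.mem_univ _, ?_, ?_⟩
    · rw [← avoids_glue_iff (hs := hs) (hb := hb) hsb h0, hglue]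
      exact hA
    · show desW (pw (unglue hs p hBof hpos)) = k - 1 - 1
      have hd := des_glue (hs := hs) (hb := hb) hsb h0 hs1 (unglue hs p hBof hpos)
      rw [hglue, hdes] at hd
      omega
  · intro p' hp'
    obtain ⟨-, hA', hdes'⟩ := Finset.mem_filter.mp hp'
    rw [Finset.mem_filter]
    refine ⟨Finset.mem_univ _, ⟨?_, ?_⟩, Bof_glue hs hb hsb h0 p'⟩
    · rw [avoids_glue_iff (hs := hs) (hb := hb) hsb h0]
      exact hA'
    · rw [des_glue (hs := hs) (hb := hb) hsb h0 hs1 p', hdes']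
      omega
  · intro p hp
    obtain ⟨-, ⟨hA, -⟩, hBof⟩ := Finset.mem_filter.mp hp
    exact glue_unglue hs hb hsb hA hBof (pos_eq hb hsb hBof)
  · intro p' hp'
    apply Equiv.ext
    intro i
    apply (Bᶜ.orderEmbOfFin hs).injective
    rw [unglue_apply hs _ _ _ i (by omega)]
    rw [glue_lt B hs hb p' (show ((⟨(i:ℕ), by omega⟩ : Fin n) : ℕ) < s from i.isLt)]
  · intro p hp
    obtain ⟨-, ⟨hA, -⟩, hBof⟩ := Finset.mem_filter.mp hp
    have hpos := pos_eq hb hsb hBof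
    have hglue := glue_unglue hs hb hsb hA hBof hpos
    have hpat := pat_glue (hs := hs) (hb := hb) hsb h0 (unglue hs p hBof hpos)
    rw [hglue] at hpat
    rw [hpat, pow_add, mul_comm]

end Unglue

open Polynomial

lemma sup_val_eq_max' {m : ℕ} (B : Finset (Fin m)) (hne : B.Nonempty) :
    B.sup (fun v => (v : ℕ)) = (B.max' hne : ℕ) := by
  apply le_antisymm
  · exact Finset.sup_le (fun x hx => Fin.le_def.mp (Finset.le_max' B x hx))
  · have h := Finset.le_sup (f := fun v : Fin m => (v : ℕ)) (s := B) (b := B.max' hne)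
        (B.max'_mem hne)
    exact h

open scoped Classical in
noncomputable def Fstat (n k : ℕ) : Polynomial ℚ :=
  ∑ p ∈ (Finset.univ : Finset (Equiv.Perm (Fin n))).filter
      (fun p => Avoids132 (pw p) ∧ desW (pw p) = k - 1),
    (Polynomial.X : Polynomial ℚ) ^ pat2_13 (pw p)

open scoped Classical in
lemma Fstat_one (n : ℕ) (hn : 1 ≤ n) : Fstat n 1 = 1 := by
  haveI : NeZero n := ⟨by omega⟩
  unfold Fstat
  have hfilter : (Finset.univ : Finset (Equiv.Perm (Fin n))).filter
      (fun p => Avoids132 (pw p) ∧ desW (pw p) = 1 - 1) = {1} := by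
    ext p
    simp only [Finset.mem_filter, Finset.mem_univ, true_and, Finset.mem_singleton]
    constructor
    · rintro ⟨-, hdes⟩
      exact eq_one_of_desW_zero (by simpa using hdes)
    · rintro rfl
      constructor
      · intro i j j' hij hj1
        rintro ⟨h1, h2⟩
        simp only [pw, Equiv.Perm.one_apply] at h1 h2
        have := Fin.lt_def.mp hij
        omega
      · unfold desW
        rw [Finset.card_eq_zero, Finset.filter_eq_empty_iff]
        intro i _
        rintro ⟨j, hj, hlt⟩
        simp only [pw, Equiv.Perm.one_apply] at hlt
        omega
  rw [hfilter, Finset.sum_singleton]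
  have hpat : pat2_13 (pw (1 : Equiv.Perm (Fin n))) = 0 := by
    unfold pat2_13
    rw [Finset.card_eq_zero, Finset.filter_eq_empty_iff]
    intro q _
    rintro ⟨hlt, j', hj', h1, h2⟩
    simp only [pw, Equiv.Perm.one_apply] at h1 h2
    have := Fin.lt_def.mp hlt
    omega
  rw [hpat, pow_zero]

open scoped Classical in
lemma decomp (n k : ℕ) [NeZero n] (hk : 2 ≤ k) :
    Fstat n k = ∑ B ∈ (Finset.univ : Finset (Finset (Fin n))).filter
        (fun B => (0 : Fin n) ∈ B ∧ B.card < n),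
      (X : Polynomial ℚ) ^ ((B.sup (fun v => (v : ℕ))) + 1 - B.card)
        * Fstat (n - B.card) (k-1) := by
  unfold Fstat
  rw [← Finset.sum_fiberwise_of_maps_to (g := Bof) (t := (Finset.univ :
    Finset (Finset (Fin n))).filter (fun B => (0 : Fin n) ∈ B ∧ B.card < n)) ?hmap]
  case hmap =>
    intro p hp
    obtain ⟨-, hA, hdes⟩ := Finset.mem_filter.mp hp
    rw [Finset.mem_filter]
    refine ⟨Finset.mem_univ _, zero_mem_Bof p, ?_⟩
    rw [Bof_card]
    have hpos : ((p.symm 0 : Fin n) : ℕ) ≠ 0 := by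
      intro h0
      have := desW_zero_of_pos_zero hA h0
      omega
    have := (p.symm 0).isLt
    omega
  apply Finset.sum_congr rfl
  intro B hB
  obtain ⟨-, h0, hcard⟩ := Finset.mem_filter.mp hB
  rw [Finset.filter_filter]
  have hble : B.card ≤ n := by
    have := Finset.card_le_univ B
    simpa using this
  have hcs : Bᶜ.card = n - B.card := by
    rw [Finset.card_compl]
    simp
  have hsb : (n - B.card) + B.card = n := by omega
  have hs1 : 0 < n - B.card := by omega
  have hfib := fiber_sum (B := B) hcs rfl hsb h0 hs1 k hk
  rw [hfib]
  congr 2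
  rw [sup_val_eq_max' B ⟨0, h0⟩]

lemma bridge (n : ℕ) [NeZero n] (G : ℕ → Polynomial ℚ) :
    ∑ B ∈ (Finset.univ : Finset (Finset (Fin n))).filter
        (fun B => (0 : Fin n) ∈ B ∧ B.card < n),
      (X : Polynomial ℚ) ^ ((B.sup (fun v => (v : ℕ))) + 1 - B.card) * G (n - B.card)
    = ∑ A ∈ (bset n).filter (fun A => A.card < n),
      (X : Polynomial ℚ) ^ (A.sup id + 1 - A.card) * G (n - A.card) := by
  classical
  refine Finset.sum_bij'
    (i := fun B _ => B.image (fun v : Fin n => (v : ℕ)))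
    (j := fun A hA => A.attachFin (fun m hm => Finset.mem_range.mp
      ((mem_bset.mp (Finset.mem_filter.mp hA).1).1 hm)))
    ?_ ?_ ?_ ?_ ?_
  · intro B hB
    obtain ⟨-, h0, hcard⟩ := Finset.mem_filter.mp hB
    rw [Finset.mem_filter, mem_bset]
    refine ⟨⟨?_, ?_⟩, ?_⟩
    · intro m hm
      obtain ⟨v, -, rfl⟩ := Finset.mem_image.mp hm
      exact Finset.mem_range.mpr v.isLt
    · exact Finset.mem_image.mpr ⟨0, h0, rfl⟩
    · rw [Finset.card_image_of_injective _ Fin.val_injective]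
      exact hcard
  · intro A hA
    obtain ⟨hA1, hA2⟩ := Finset.mem_filter.mp hA
    rw [Finset.mem_filter]
    refine ⟨Finset.mem_univ _, ?_, ?_⟩
    · rw [Finset.mem_attachFin]
      have h0 : (0 : ℕ) ∈ A := (mem_bset.mp hA1).2
      have : ((0 : Fin n) : ℕ) = 0 := rfl
      rw [this]
      exact h0
    · rw [Finset.card_attachFin]
      exact hA2
  · intro B hB
    ext a
    rw [Finset.mem_attachFin]
    constructor
    · intro h
      obtain ⟨v, hv, hveq⟩ := Finset.mem_image.mp h
      have : v = a := Fin.ext hveq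
      rwa [← this]
    · intro h
      exact Finset.mem_image.mpr ⟨a, h, rfl⟩
  · intro A hA
    ext m
    constructor
    · intro h
      obtain ⟨v, hv, hveq⟩ := Finset.mem_image.mp h
      rw [Finset.mem_attachFin] at hv
      rwa [← hveq]
    · intro h
      have hmn : m < n := Finset.mem_range.mp ((mem_bset.mp (Finset.mem_filter.mp hA).1).1 h)
      refine Finset.mem_image.mpr ⟨⟨m, hmn⟩, ?_, rfl⟩
      rw [Finset.mem_attachFin]
      exact h
  · intro B hB
    rw [Finset.sup_image, Finset.card_image_of_injective _ Fin.val_injective]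
    have : (id ∘ fun v : Fin n => (v : ℕ)) = fun v : Fin n => (v : ℕ) := rfl
    rw [this]

open scoped Classical in
lemma main_aux : ∀ k, 1 ≤ k → ∀ n, 1 ≤ n → Fstat n k = Sqt n k := by
  intro k
  induction k with
  | zero => omega
  | succ j ihj =>
    intro _ n hn
    rcases Nat.eq_zero_or_pos j with rfl | hj
    · rw [Fstat_one n hn, Sqt_one n hn]
    · haveI : NeZero n := ⟨by omega⟩
      rw [decomp n (j+1) (by omega)]
      have hstep : ∀ B ∈ (Finset.univ : Finset (Finset (Fin n))).filter
          (fun B => (0 : Fin n) ∈ B ∧ B.card < n),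
          (X : Polynomial ℚ) ^ (B.sup (fun v => (v : ℕ)) + 1 - B.card)
            * Fstat (n - B.card) ((j+1)-1)
          = (X : Polynomial ℚ) ^ (B.sup (fun v => (v : ℕ)) + 1 - B.card)
            * Sqt (n - B.card) j := by
        intro B hB
        obtain ⟨-, h0, hcard⟩ := Finset.mem_filter.mp hB
        rw [show (j+1)-1 = j from rfl, ihj hj (n - B.card) (by omega)]
      rw [Finset.sum_congr rfl hstep, bridge n (fun m => Sqt m j)]
      have hzero : ∑ A ∈ (bset n).filter (fun A => ¬ A.card < n),
          (X : Polynomial ℚ) ^ (A.sup id + 1 - A.card) * Sqt (n - A.card) j = 0 := by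
        apply Finset.sum_eq_zero
        intro A hA
        obtain ⟨hA1, hA2⟩ := Finset.mem_filter.mp hA
        have hle := card_le_of_mem_bset hA1
        have hcc : n - A.card = 0 := by omega
        rw [hcc, Sqt_eq_zero_of_lt (by omega), mul_zero]
      have hsplit := Finset.sum_filter_add_sum_filter_not (bset n) (fun A => A.card < n)
        (fun A => (X : Polynomial ℚ) ^ (A.sup id + 1 - A.card) * Sqt (n - A.card) j)
      have htot : ∑ A ∈ (bset n).filter (fun A => A.card < n),
          (X : Polynomial ℚ) ^ (A.sup id + 1 - A.card) * Sqt (n - A.card) j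
          = ∑ A ∈ bset n,
          (X : Polynomial ℚ) ^ (A.sup id + 1 - A.card) * Sqt (n - A.card) j := by
        rw [← hsplit, hzero, add_zero]
      rw [htot, Ilem n hn j]

open scoped Classical in
/-- The sum of q^{(2-13)(σ)} over 1-32-avoiding permutations of [n] with k−1 descents is S̃_q(n,k). -/
theorem stmt13 (n k : ℕ) (hk : 1 ≤ k) (hn : k ≤ n) :
    ∑ p ∈ (Finset.univ : Finset (Equiv.Perm (Fin n))).filter
        (fun p => Avoids132 (pw p) ∧ desW (pw p) = k - 1),
      (Polynomial.X : Polynomial ℚ) ^ pat2_13 (pw p) = Sqt n k := by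
  exact main_aux k hk n (le_trans hk hn)
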